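/- For every integer k ≥ 1 and every real λ > 0, the variance of the Poisson distribution of order k is σ²(k,λ) = Σ_{m=0}^∞ (m − μ(k,λ))² · P_m(k,λ) = k(k+1)(2k+1)λ/6, where μ(k,λ) = k(k+1)λ/2 is the mean. -/

import Mathlib

open scoped BigOperators

/-- Probability mass function of the Poisson distribution of order `k` with rate `lam`:
`P_n(k,λ) = e^{-kλ} · Σ_{n₁+2n₂+⋯+k·n_k = n} ∏_{j=1}^k λ^{n_j}/n_j!`. -/
noncomputable def poissonK (k : ℕ) (lam : ℝ) (n : ℕ) : ℝ :=
  Real.exp (-(k * lam)) *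
    ∑ f ∈ Finset.filter (fun f : Fin k → ℕ => ∑ j : Fin k, (j.1 + 1) * f j = n)
        (Fintype.piFinset fun _ : Fin k => Finset.range (n + 1)),
      ∏ j : Fin k, lam ^ f j / (Nat.factorial (f j) : ℝ)

set_option maxHeartbeats 1000000

open Finset

/-- The Poisson-type summand `λ^n/n!`. -/
noncomputable def pkAux (lam : ℝ) (n : ℕ) : ℝ := lam ^ n / n.factorial

private lemma pk_hsExp' (x : ℝ) : HasSum (fun n : ℕ => x ^ n / n.factorial) (Real.exp x) := by
  rw [Real.exp_eq_exp_ℝ]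
  exact NormedSpace.expSeries_div_hasSum_exp x

private lemma pk_hsN (x : ℝ) :
    HasSum (fun n : ℕ => (n : ℝ) * (x ^ n / n.factorial)) (x * Real.exp x) := by
  have h := (pk_hsExp' x).mul_left x
  have e : (fun n : ℕ => x * (x ^ n / n.factorial)) =
      fun n : ℕ => ((n + 1 : ℕ) : ℝ) * (x ^ (n + 1) / (n + 1).factorial) := by
    funext n
    have hn : ((n.factorial : ℝ)) ≠ 0 := Nat.cast_ne_zero.2 n.factorial_ne_zero
    rw [Nat.factorial_succ]
    push_cast
    field_simp
    ring
  rw [e] at h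
  have := (hasSum_nat_add_iff (f := fun n : ℕ => (n : ℝ) * (x ^ n / n.factorial)) 1).1 h
  simpa using this

private lemma pk_hsN2 (x : ℝ) :
    HasSum (fun n : ℕ => ((n : ℝ))^2 * (x ^ n / n.factorial)) ((x^2 + x) * Real.exp x) := by
  have h := (pk_hsExp' x).mul_left (x^2)
  have e : (fun n : ℕ => x^2 * (x ^ n / n.factorial)) =
      fun n : ℕ => ((n + 2 : ℕ) : ℝ) * (((n + 2 : ℕ) : ℝ) - 1) * (x ^ (n + 2) / (n + 2).factorial) := by
    funext n
    have hn : ((n.factorial : ℝ)) ≠ 0 := Nat.cast_ne_zero.2 n.factorial_ne_zero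
    have h2 : (n + 2).factorial = (n + 2) * ((n + 1) * n.factorial) := by
      rw [Nat.factorial_succ, Nat.factorial_succ]
    rw [h2]
    push_cast
    field_simp
    ring
  rw [e] at h
  have h2 := (hasSum_nat_add_iff
    (f := fun n : ℕ => ((n : ℝ)) * (((n : ℝ)) - 1) * (x ^ n / n.factorial)) 2).1 h
  have h3 : HasSum (fun n : ℕ => ((n : ℝ)) * (((n : ℝ)) - 1) * (x ^ n / n.factorial))
      (x^2 * Real.exp x) := by
    simpa [Finset.sum_range_succ] using h2
  have h4 := h3.add (pk_hsN x)
  have e2 : (fun n : ℕ => ((n : ℝ)) * (((n : ℝ)) - 1) * (x ^ n / n.factorial)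
      + (n : ℝ) * (x ^ n / n.factorial)) = fun n : ℕ => ((n : ℝ))^2 * (x ^ n / n.factorial) := by
    funext n; ring
  rw [e2] at h4
  convert h4 using 1
  ring

lemma pk_hsExp (x : ℝ) : HasSum (pkAux x) (Real.exp x) := pk_hsExp' x

lemma pk_hsC1 (x : ℝ) : HasSum (fun n : ℕ => ((n : ℝ) - x) * pkAux x n) 0 := by
  have h := (pk_hsN x).sub ((pk_hsExp' x).mul_left x)
  have e : (fun n : ℕ => (n : ℝ) * (x ^ n / n.factorial) - x * (x ^ n / n.factorial)) =
      fun n : ℕ => ((n : ℝ) - x) * (x ^ n / n.factorial) := by funext n; ring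
  rw [e] at h
  rw [sub_self] at h; exact h

lemma pk_hsC2 (x : ℝ) :
    HasSum (fun n : ℕ => ((n : ℝ) - x)^2 * pkAux x n) (x * Real.exp x) := by
  have h := ((pk_hsN2 x).sub ((pk_hsN x).mul_left (2*x))).add ((pk_hsExp' x).mul_left (x^2))
  have e : (fun n : ℕ => ((n:ℝ))^2 * (x ^ n / n.factorial)
      - 2*x*((n:ℝ) * (x ^ n / n.factorial)) + x^2 * (x ^ n / n.factorial)) =
      fun n : ℕ => ((n : ℝ) - x)^2 * (x ^ n / n.factorial) := by funext n; ring
  rw [e] at h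
  have hv : (x ^ 2 + x) * Real.exp x - 2 * x * (x * Real.exp x) + x ^ 2 * Real.exp x = x * Real.exp x := by
    ring
  rw [hv] at h; exact h

lemma pk_sumC0 (x : ℝ) (hx : 0 ≤ x) : Summable (fun n : ℕ => ‖pkAux x n‖) := by
  refine ((pk_hsExp x).summable).congr fun n => ?_
  rw [Real.norm_eq_abs, abs_of_nonneg ?_]
  unfold pkAux
  positivity

lemma pk_sumC1 (x : ℝ) (hx : 0 ≤ x) :
    Summable (fun n : ℕ => ‖((n : ℝ) - x) * pkAux x n‖) := by
  have hsum : Summable (fun n : ℕ => (n : ℝ) * (x ^ n / n.factorial)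
      + x * (x ^ n / n.factorial)) :=
    ((pk_hsN x).summable).add (((pk_hsExp' x).summable).mul_left x)
  refine Summable.of_nonneg_of_le (fun n => norm_nonneg _) (fun n => ?_) hsum
  have h1 : (0:ℝ) ≤ x ^ n / n.factorial := by positivity
  have h0 : pkAux x n = x ^ n / n.factorial := rfl
  rw [Real.norm_eq_abs, abs_mul, h0, abs_of_nonneg h1]
  have h2 : |(n : ℝ) - x| ≤ (n : ℝ) + x := by
    rw [abs_le]; constructor <;> nlinarith [Nat.cast_nonneg (α := ℝ) n]
  nlinarith [abs_nonneg ((n:ℝ) - x)]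

lemma pk_sumC2 (x : ℝ) (hx : 0 ≤ x) :
    Summable (fun n : ℕ => ‖((n : ℝ) - x)^2 * pkAux x n‖) := by
  refine ((pk_hsC2 x).summable).congr fun n => ?_
  rw [Real.norm_eq_abs, abs_of_nonneg ?_]
  have h0 : pkAux x n = x ^ n / n.factorial := rfl
  rw [h0]
  positivity

lemma pk_pi_hasSum : ∀ {k : ℕ} (g : Fin k → ℕ → ℝ) (a : Fin k → ℝ),
    (∀ i, HasSum (g i) (a i)) → (∀ i, Summable fun n => ‖g i n‖) →
    HasSum (fun f : Fin k → ℕ => ∏ i, g i (f i)) (∏ i, a i) ∧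
      Summable (fun f : Fin k → ℕ => ‖∏ i, g i (f i)‖) := by
  intro k
  induction k with
  | zero =>
    intro g a _ _
    constructor
    · simpa using hasSum_single (f := fun f : Fin 0 → ℕ => ∏ i, g i (f i))
        (fun _ => 0) (fun b' hb' => absurd (Subsingleton.elim _ _) hb')
    · exact (hasSum_single (f := fun f : Fin 0 → ℕ => ‖∏ i, g i (f i)‖)
        (fun _ => 0) (fun b' hb' => absurd (Subsingleton.elim _ _) hb')).summable
  | succ k ih =>
    intro g a hg hsg
    obtain ⟨ih1, ih2⟩ := ih (fun i : Fin k => g i.succ) (fun i : Fin k => a i.succ)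
      (fun i => hg i.succ) (fun i => hsg i.succ)
    have hsum := summable_mul_of_summable_norm (hsg 0) ih2
    have hm0 := (hg 0).mul ih1 hsum
    have hm : HasSum (fun p : ℕ × (Fin k → ℕ) => g 0 p.1 * ∏ i : Fin k, g i.succ (p.2 i))
        (a 0 * ∏ i : Fin k, a i.succ) := hm0
    have hmn0 := (hsg 0).mul_norm ih2
    have hmn : Summable (fun p : ℕ × (Fin k → ℕ) =>
        ‖g 0 p.1 * ∏ i : Fin k, g i.succ (p.2 i)‖) := hmn0
    set e : (ℕ × (Fin k → ℕ)) ≃ (Fin (k+1) → ℕ) := Fin.consEquiv (fun _ => ℕ) with he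
    have hcomp : ((fun f : Fin (k+1) → ℕ => ∏ i, g i (f i)) ∘ e) =
        fun p : ℕ × (Fin k → ℕ) => g 0 p.1 * ∏ i : Fin k, g i.succ (p.2 i) := by
      funext p
      simp [he, Fin.consEquiv, Fin.prod_univ_succ]
    constructor
    · refine (e.hasSum_iff).1 ?_
      rw [hcomp, Fin.prod_univ_succ]
      exact hm
    · have := (e.summable_iff (f := fun f : Fin (k+1) → ℕ => ‖∏ i, g i (f i)‖)).1 ?_
      · exact this
      · have heq : ((fun f : Fin (k+1) → ℕ => ‖∏ i, g i (f i)‖) ∘ e) =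
            fun p : ℕ × (Fin k → ℕ) => ‖g 0 p.1 * ∏ i : Fin k, g i.succ (p.2 i)‖ := by
          funext p
          exact congrArg norm (congrFun hcomp p)
        rw [heq]
        exact hmn

lemma pk_pair_hasSum (k : ℕ) (lam : ℝ) (hlam : 0 < lam) (p : Fin k × Fin k) :
    HasSum (fun f : Fin k → ℕ =>
        ((f p.1 : ℝ) - lam) * ((f p.2 : ℝ) - lam) * ∏ j : Fin k, pkAux lam (f j))
      (if p.1 = p.2 then lam * Real.exp lam ^ k else 0) := by
  classical
  set gp : Fin k → ℕ → ℝ := fun j n =>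
    (if j = p.1 then ((n:ℝ) - lam) else 1) * ((if j = p.2 then ((n:ℝ) - lam) else 1)
      * pkAux lam n) with hgp
  set ap : Fin k → ℝ := fun j =>
    if j = p.1 then (if p.1 = p.2 then lam * Real.exp lam else 0)
    else if j = p.2 then 0 else Real.exp lam with hap
  have hsums : ∀ j, HasSum (gp j) (ap j) := by
    intro j
    by_cases h1 : j = p.1 <;> by_cases h2 : j = p.2
    · have hd : p.1 = p.2 := h1 ▸ h2
      have e1 : gp j = fun n : ℕ => ((n:ℝ) - lam)^2 * pkAux lam n := by
        funext n; simp only [hgp, if_pos h1, if_pos h2]; ring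
      have e2 : ap j = lam * Real.exp lam := by simp [hap, h1, hd]
      rw [e1, e2]; exact pk_hsC2 lam
    · have hd : p.1 ≠ p.2 := fun hh => h2 (h1.trans hh)
      have e1 : gp j = fun n : ℕ => ((n:ℝ) - lam) * pkAux lam n := by
        funext n; simp only [hgp, if_pos h1, if_neg h2]; ring
      have e2 : ap j = 0 := by simp [hap, h1, hd]
      rw [e1, e2]; exact pk_hsC1 lam
    · have hd : p.1 ≠ p.2 := fun hh => h1 (h2.trans hh.symm)
      have e1 : gp j = fun n : ℕ => ((n:ℝ) - lam) * pkAux lam n := by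
        funext n; simp only [hgp, if_neg h1, if_pos h2]; ring
      have e2 : ap j = 0 := by simp [hap, h2, Ne.symm hd]
      rw [e1, e2]; exact pk_hsC1 lam
    · have e1 : gp j = fun n : ℕ => pkAux lam n := by
        funext n; simp only [hgp, if_neg h1, if_neg h2]; ring
      have e2 : ap j = Real.exp lam := by simp [hap, h1, h2]
      rw [e1, e2]; exact pk_hsExp lam
  have hnorms : ∀ j, Summable (fun n => ‖gp j n‖) := by
    intro j
    by_cases h1 : j = p.1 <;> by_cases h2 : j = p.2
    · have e1 : gp j = fun n : ℕ => ((n:ℝ) - lam)^2 * pkAux lam n := by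
        funext n; simp only [hgp, if_pos h1, if_pos h2]; ring
      rw [e1]; exact pk_sumC2 lam hlam.le
    · have e1 : gp j = fun n : ℕ => ((n:ℝ) - lam) * pkAux lam n := by
        funext n; simp only [hgp, if_pos h1, if_neg h2]; ring
      rw [e1]; exact pk_sumC1 lam hlam.le
    · have e1 : gp j = fun n : ℕ => ((n:ℝ) - lam) * pkAux lam n := by
        funext n; simp only [hgp, if_neg h1, if_pos h2]; ring
      rw [e1]; exact pk_sumC1 lam hlam.le
    · have e1 : gp j = fun n : ℕ => pkAux lam n := by
        funext n; simp only [hgp, if_neg h1, if_neg h2]; ring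
      rw [e1]; exact pk_sumC0 lam hlam.le
  obtain ⟨hps, -⟩ := pk_pi_hasSum gp ap hsums hnorms
  have eF : (fun f : Fin k → ℕ => ∏ j : Fin k, gp j (f j)) =
      fun f : Fin k → ℕ =>
        ((f p.1 : ℝ) - lam) * ((f p.2 : ℝ) - lam) * ∏ j : Fin k, pkAux lam (f j) := by
    funext f
    simp only [hgp]
    rw [Finset.prod_mul_distrib, Finset.prod_mul_distrib,
      Finset.prod_ite_eq' univ p.1 (fun j => ((f j : ℝ) - lam)),
      Finset.prod_ite_eq' univ p.2 (fun j => ((f j : ℝ) - lam))]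
    simp [mul_assoc]
  have eA : (∏ j : Fin k, ap j) = (if p.1 = p.2 then lam * (Real.exp lam) ^ k else 0) := by
    by_cases hd : p.1 = p.2
    · rw [if_pos hd]
      have e3 : ap = fun j => (if j = p.1 then lam else 1) * Real.exp lam := by
        funext j
        by_cases hj : j = p.1
        · simp [hap, hj, hd]
        · have hj2 : j ≠ p.2 := fun hh => hj (hh.trans hd.symm)
          simp [hap, hj, hj2]
      rw [e3, Finset.prod_mul_distrib,
        Finset.prod_ite_eq' univ p.1 (fun _ => lam), Finset.prod_const]
      simp [Finset.card_univ]
    · rw [if_neg hd]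
      refine Finset.prod_eq_zero (Finset.mem_univ p.1) ?_
      simp [hap, hd]
  rw [eF, eA] at hps
  exact hps

lemma pk_gaussAux (k : ℕ) :
    ∑ i ∈ range k, ((i : ℝ) + 1) = (k : ℝ) * ((k : ℝ) + 1) / 2 := by
  induction k with
  | zero => simp
  | succ k ih => rw [Finset.sum_range_succ, ih]; push_cast; ring

lemma pk_sqAux (k : ℕ) :
    ∑ i ∈ range k, ((i : ℝ) + 1)^2 = (k : ℝ) * ((k : ℝ) + 1) * (2 * (k : ℝ) + 1) / 6 := by
  induction k with
  | zero => simp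
  | succ k ih => rw [Finset.sum_range_succ, ih]; push_cast; ring

/-- The variance of the Poisson distribution of order `k` is
`σ²(k,λ) = Σ_{m=0}^∞ (m − μ(k,λ))²·P_m(k,λ) = k(k+1)(2k+1)λ/6`, where
`μ(k,λ) = k(k+1)λ/2` is the mean. -/
theorem poissonK_variance (k : ℕ) (hk : 1 ≤ k) (lam : ℝ) (hlam : 0 < lam) :
    HasSum (fun m : ℕ => ((m : ℝ) - k * (k + 1) * lam / 2) ^ 2 * poissonK k lam m)
      (k * (k + 1) * (2 * k + 1) * lam / 6) := by
  set μ : ℝ := ↑k * (↑k + 1) * lam / 2 with hμ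
  set S : (Fin k → ℕ) → ℕ := fun f => ∑ j : Fin k, (j.1 + 1) * f j with hS
  set Fs : ℕ → Finset (Fin k → ℕ) := fun m =>
    Finset.filter (fun f : Fin k → ℕ => ∑ j : Fin k, (j.1 + 1) * f j = m)
      (Fintype.piFinset fun _ : Fin k => Finset.range (m + 1)) with hFs
  -- main sum over the pi type
  have hmain : HasSum (fun f : Fin k → ℕ => ((S f : ℝ) - μ)^2 * ∏ j : Fin k, pkAux lam (f j))
      (lam * Real.exp lam ^ k * (↑k * (↑k + 1) * (2 * ↑k + 1) / 6)) := by
    have hall := hasSum_sum (s := (univ : Finset (Fin k × Fin k)))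
      (f := fun p (f : Fin k → ℕ) => ((p.1.1 + 1 : ℝ) * (p.2.1 + 1)) *
        (((f p.1 : ℝ) - lam) * ((f p.2 : ℝ) - lam) * ∏ j : Fin k, pkAux lam (f j)))
      (a := fun p => ((p.1.1 + 1 : ℝ) * (p.2.1 + 1)) *
        (if p.1 = p.2 then lam * Real.exp lam ^ k else 0))
      (fun p _ => (pk_pair_hasSum k lam hlam p).mul_left _)
    have eV : (∑ p : Fin k × Fin k, ((p.1.1 + 1 : ℝ) * (p.2.1 + 1)) *
        (if p.1 = p.2 then lam * Real.exp lam ^ k else 0))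
        = lam * Real.exp lam ^ k * (↑k * (↑k + 1) * (2 * ↑k + 1) / 6) := by
      rw [Fintype.sum_prod_type]
      have e1 : ∀ i : Fin k, (∑ j : Fin k, ((i.1 + 1 : ℝ) * (j.1 + 1)) *
          (if i = j then lam * Real.exp lam ^ k else 0))
          = ((i.1 : ℝ) + 1)^2 * (lam * Real.exp lam ^ k) := by
        intro i
        rw [Finset.sum_congr rfl (fun j _ => by
          rw [mul_ite, mul_zero] :
          ∀ j ∈ univ, ((i.1 + 1 : ℝ) * (j.1 + 1)) *
            (if i = j then lam * Real.exp lam ^ k else 0) =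
            if i = j then ((i.1 + 1 : ℝ) * (j.1 + 1)) * (lam * Real.exp lam ^ k) else 0)]
        rw [Finset.sum_ite_eq]
        rw [if_pos (Finset.mem_univ i)]
        ring
      rw [Finset.sum_congr rfl (fun i _ => e1 i), ← Finset.sum_mul,
        Fin.sum_univ_eq_sum_range (fun i => ((i : ℝ) + 1)^2), pk_sqAux]
      ring
    rw [eV] at hall
    have eG : (fun f : Fin k → ℕ => ∑ p : Fin k × Fin k, ((p.1.1 + 1 : ℝ) * (p.2.1 + 1)) *
        (((f p.1 : ℝ) - lam) * ((f p.2 : ℝ) - lam) * ∏ j : Fin k, pkAux lam (f j)))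
        = fun f : Fin k → ℕ => ((S f : ℝ) - μ)^2 * ∏ j : Fin k, pkAux lam (f j) := by
      funext f
      have key : ((S f : ℝ) - μ) = ∑ i : Fin k, ((i.1 : ℝ) + 1) * ((f i : ℝ) - lam) := by
        have h1 : ((S f : ℝ)) = ∑ i : Fin k, ((i.1 : ℝ) + 1) * (f i : ℝ) := by
          simp only [hS, Nat.cast_sum, Nat.cast_mul, Nat.cast_add, Nat.cast_one]
        have h2 : μ = ∑ i : Fin k, ((i.1 : ℝ) + 1) * lam := by
          rw [← Finset.sum_mul, Fin.sum_univ_eq_sum_range (fun i => ((i : ℝ) + 1)),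
            pk_gaussAux, hμ]
          ring
        rw [h1, h2, ← Finset.sum_sub_distrib]
        exact Finset.sum_congr rfl fun i _ => by ring
      rw [key, sq, Finset.sum_mul_sum, Fintype.sum_prod_type, Finset.sum_mul]
      refine Finset.sum_congr rfl fun i _ => ?_
      rw [Finset.sum_mul]
      refine Finset.sum_congr rfl fun j _ => ?_
      ring
    rw [eG] at hall
    exact hall
  -- membership characterization of the fibers
  have hmem : ∀ (m : ℕ) (f : Fin k → ℕ), S f = m ↔ f ∈ Fs m := by
    intro m f
    constructor
    · intro hf
      refine Finset.mem_filter.2 ⟨Fintype.mem_piFinset.2 fun j => ?_, hf⟩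
      rw [Finset.mem_range, Nat.lt_succ_iff, ← hf]
      calc f j ≤ (j.1 + 1) * f j := Nat.le_mul_of_pos_left _ (Nat.succ_pos _)
        _ ≤ S f := Finset.single_le_sum (f := fun j : Fin k => (j.1 + 1) * f j)
            (fun i _ => Nat.zero_le _) (Finset.mem_univ j)
    · intro hf; exact (Finset.mem_filter.1 hf).2
  -- inner fiber sums
  have hinner : ∀ m : ℕ, HasSum (fun c : {f : Fin k → ℕ // S f = m} =>
      ((S c.1 : ℝ) - μ)^2 * ∏ j : Fin k, pkAux lam (c.1 j))
      (((m : ℝ) - μ)^2 * ∑ f ∈ Fs m, ∏ j : Fin k, pkAux lam (f j)) := by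
    intro m
    let e2 : {f : Fin k → ℕ // S f = m} ≃ {f : Fin k → ℕ // f ∈ Fs m} :=
      Equiv.subtypeEquivRight (hmem m)
    have hfin := (Fs m).hasSum (fun f => ((m : ℝ) - μ)^2 * ∏ j : Fin k, pkAux lam (f j))
    have h3 := (e2.hasSum_iff
      (f := fun x : {f : Fin k → ℕ // f ∈ Fs m} =>
        ((m : ℝ) - μ)^2 * ∏ j : Fin k, pkAux lam (x.1 j))).2 hfin
    have efun : (fun c : {f : Fin k → ℕ // S f = m} =>
        ((S c.1 : ℝ) - μ)^2 * ∏ j : Fin k, pkAux lam (c.1 j)) =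
        ((fun x : {f : Fin k → ℕ // f ∈ Fs m} =>
          ((m : ℝ) - μ)^2 * ∏ j : Fin k, pkAux lam (x.1 j)) ∘ e2) := by
      funext c
      have hc : S c.1 = m := c.2
      simp only [Function.comp_apply, e2, Equiv.subtypeEquivRight_apply]
      rw [hc]
    rw [efun, Finset.mul_sum]
    exact h3
  -- regroup along fibers of S
  have hsigma := ((Equiv.sigmaFiberEquiv S).hasSum_iff).2 hmain
  have hb : HasSum (fun m : ℕ => ((m : ℝ) - μ)^2 * ∑ f ∈ Fs m, ∏ j : Fin k, pkAux lam (f j))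
      (lam * Real.exp lam ^ k * (↑k * (↑k + 1) * (2 * ↑k + 1) / 6)) := by
    refine HasSum.sigma hsigma ?_
    intro m
    exact hinner m
  -- finish
  have hfun2 : (fun m : ℕ => ((m : ℝ) - μ) ^ 2 * poissonK k lam m)
      = fun m : ℕ => Real.exp (-(↑k * lam)) *
          (((m : ℝ) - μ)^2 * ∑ f ∈ Fs m, ∏ j : Fin k, pkAux lam (f j)) := by
    funext m
    rw [poissonK]
    simp only [hFs, pkAux]
    ring
  have evalue : (↑k * (↑k + 1) * (2 * ↑k + 1) * lam / 6 : ℝ)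
      = Real.exp (-(↑k * lam)) *
        (lam * Real.exp lam ^ k * (↑k * (↑k + 1) * (2 * ↑k + 1) / 6)) := by
    have h1 : Real.exp (-(↑k * lam)) * Real.exp (↑k * lam) = 1 := by
      rw [← Real.exp_add]; simp
    calc (↑k * (↑k + 1) * (2 * ↑k + 1) * lam / 6 : ℝ)
        = (Real.exp (-(↑k * lam)) * Real.exp (↑k * lam)) *
          (↑k * (↑k + 1) * (2 * ↑k + 1) * lam / 6) := by rw [h1]; ring
      _ = Real.exp (-(↑k * lam)) *
          (lam * Real.exp lam ^ k * (↑k * (↑k + 1) * (2 * ↑k + 1) / 6)) := by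
          rw [← Real.exp_nat_mul]; ring
  rw [hfun2, evalue]
  exact hb.mul_left _
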